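/- Let f₁, f₂ ∈ L¹(ℝ³) be nonnegative, supported in {|q| ≤ 2R}, with proper densities nᵢ = √((∫ fᵢ dq)² − |∫ q fᵢ dq/√(1+|q|²)|²). Then |n₁ − n₂| ≤ 2√(1+4R²) ∫_{|q| ≤ 2R} |f₁ − f₂| dq. -/

import Mathlib

open MeasureTheory

set_option maxHeartbeats 2000000 in
theorem stmt_19 (R : ℝ) (hR : 0 < R) (f₁ f₂ : EuclideanSpace ℝ (Fin 3) → ℝ)
    (h₁_nonneg : ∀ q, 0 ≤ f₁ q) (h₂_nonneg : ∀ q, 0 ≤ f₂ q)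
    (h₁_int : Integrable f₁) (h₂_int : Integrable f₂)
    (h₁_supp : ∀ q : EuclideanSpace ℝ (Fin 3), 2 * R < ‖q‖ → f₁ q = 0)
    (h₂_supp : ∀ q : EuclideanSpace ℝ (Fin 3), 2 * R < ‖q‖ → f₂ q = 0)
    (n₁ n₂ : ℝ)
    (hn₁ : n₁ = Real.sqrt ((∫ q, f₁ q) ^ 2 -
      ∑ i : Fin 3, (∫ q : EuclideanSpace ℝ (Fin 3), q i * f₁ q / Real.sqrt (1 + ‖q‖ ^ 2)) ^ 2))
    (hn₂ : n₂ = Real.sqrt ((∫ q, f₂ q) ^ 2 -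
      ∑ i : Fin 3, (∫ q : EuclideanSpace ℝ (Fin 3), q i * f₂ q / Real.sqrt (1 + ‖q‖ ^ 2)) ^ 2)) :
    |n₁ - n₂| ≤ 2 * Real.sqrt (1 + 4 * R ^ 2)
      * ∫ q in {q : EuclideanSpace ℝ (Fin 3) | ‖q‖ ≤ 2 * R}, |f₁ q - f₂ q| := by
  have sqle : ∀ a b : ℝ, 0 ≤ a → 0 ≤ b → a ^ 2 ≤ b ^ 2 → a ≤ b := by
    intro a b ha hb h
    have := Real.sqrt_le_sqrt h
    rwa [Real.sqrt_sq ha, Real.sqrt_sq hb] at this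
  set s := Real.sqrt (1 + 4 * R ^ 2) with hs_def
  have hs_sq : s ^ 2 = 1 + 4 * R ^ 2 := Real.sq_sqrt (by positivity)
  have hs_pos : 0 < s := Real.sqrt_pos.mpr (by positivity)
  have h2Rs : 2 * R ≤ s := sqle _ _ (by linarith) hs_pos.le (by nlinarith)
  set w : EuclideanSpace ℝ (Fin 3) → ℝ := fun q => Real.sqrt (1 + ‖q‖ ^ 2) with hw_def
  have hw_pos : ∀ q : EuclideanSpace ℝ (Fin 3), 0 < w q :=
    fun q => Real.sqrt_pos.mpr (by positivity)
  have hw_sq : ∀ q : EuclideanSpace ℝ (Fin 3), (w q) ^ 2 = 1 + ‖q‖ ^ 2 :=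
    fun q => Real.sq_sqrt (by positivity)
  have hw_ge : ∀ q : EuclideanSpace ℝ (Fin 3), ‖q‖ ≤ w q :=
    fun q => sqle _ _ (norm_nonneg q) (hw_pos q).le (by nlinarith [hw_sq q])
  set G : (EuclideanSpace ℝ (Fin 3) → ℝ) → EuclideanSpace ℝ (Fin 3) → EuclideanSpace ℝ (Fin 3) :=
    fun f q => (f q / w q) • q with hG_def
  have hGnorm : ∀ (f : EuclideanSpace ℝ (Fin 3) → ℝ) (q : EuclideanSpace ℝ (Fin 3)),
      ‖G f q‖ = |f q| * (‖q‖ / w q) := by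
    intro f q
    rw [hG_def]
    simp only [norm_smul, Real.norm_eq_abs, abs_div, abs_of_pos (hw_pos q)]
    ring
  have hratio1 : ∀ q : EuclideanSpace ℝ (Fin 3), ‖q‖ / w q ≤ 1 := by
    intro q
    rw [div_le_one (hw_pos q)]
    exact hw_ge q
  have hratioR : ∀ q : EuclideanSpace ℝ (Fin 3), ‖q‖ ≤ 2 * R → ‖q‖ / w q ≤ 2 * R / s := by
    intro q hq
    rw [div_le_div_iff₀ (hw_pos q) hs_pos]
    refine sqle _ _ (mul_nonneg (norm_nonneg q) hs_pos.le)
      (mul_nonneg (by linarith) (hw_pos q).le) ?_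
    have h1 : (‖q‖ * s) ^ 2 = ‖q‖ ^ 2 * (1 + 4 * R ^ 2) := by rw [mul_pow, hs_sq]
    have h2 : (2 * R * w q) ^ 2 = 4 * R ^ 2 * (1 + ‖q‖ ^ 2) := by rw [mul_pow, hw_sq]; ring
    nlinarith [norm_nonneg q]
  have hwcont : Continuous w := Real.continuous_sqrt.comp (continuous_const.add
    ((continuous_norm (E := EuclideanSpace ℝ (Fin 3))).pow 2))
  have hGint : ∀ (f : EuclideanSpace ℝ (Fin 3) → ℝ), (∀ q, 0 ≤ f q) → Integrable f →
      Integrable (G f) := by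
    intro f hf hfi
    have hasm : AEStronglyMeasurable (G f) volume := by
      apply AEStronglyMeasurable.fun_smul _ aestronglyMeasurable_id
      simp only [hw_def, div_eq_mul_inv]
      exact hfi.aestronglyMeasurable.mul (hwcont.measurable.inv.aestronglyMeasurable)
    refine Integrable.mono hfi hasm (Filter.Eventually.of_forall fun q => ?_)
    rw [hGnorm f q, Real.norm_eq_abs]
    calc |f q| * (‖q‖ / w q) ≤ |f q| * 1 := mul_le_mul_of_nonneg_left (hratio1 q) (abs_nonneg _)
      _ = |f q| := mul_one _
  have hG₁ := hGint f₁ h₁_nonneg h₁_int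
  have hG₂ := hGint f₂ h₂_nonneg h₂_int
  set A₁ := ∫ q, f₁ q with hA₁_def
  set A₂ := ∫ q, f₂ q with hA₂_def
  set D := ∫ q : EuclideanSpace ℝ (Fin 3), |f₁ q - f₂ q| with hD_def
  set V₁ := ∫ q, G f₁ q with hV₁_def
  set V₂ := ∫ q, G f₂ q with hV₂_def
  have hA₁_nonneg : 0 ≤ A₁ := integral_nonneg h₁_nonneg
  have hA₂_nonneg : 0 ≤ A₂ := integral_nonneg h₂_nonneg
  have hD_nonneg : 0 ≤ D := integral_nonneg fun q => abs_nonneg _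
  have hcomp : ∀ (f : EuclideanSpace ℝ (Fin 3) → ℝ), (∀ q, 0 ≤ f q) → Integrable f →
      ∀ j : Fin 3,
      (∫ q : EuclideanSpace ℝ (Fin 3), q j * f q / Real.sqrt (1 + ‖q‖ ^ 2)) = (∫ q, G f q) j := by
    intro f hf hfi j
    have h := (EuclideanSpace.proj (𝕜 := ℝ) j).integral_comp_comm (hGint f hf hfi)
    have h2 : ((EuclideanSpace.proj (𝕜 := ℝ) j) (∫ q, G f q)) = (∫ q, G f q) j := rfl
    rw [h2] at h
    rw [← h]
    congr 1
    funext q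
    show q j * f q / Real.sqrt (1 + ‖q‖ ^ 2) = (G f q) j
    rw [hG_def]
    show q j * f q / Real.sqrt (1 + ‖q‖ ^ 2) = (f q / w q) * q j
    rw [hw_def]
    ring
  have hnormsq : ∀ V : EuclideanSpace ℝ (Fin 3), ∑ i : Fin 3, (V i) ^ 2 = ‖V‖ ^ 2 := by
    intro V
    rw [EuclideanSpace.norm_eq, Real.sq_sqrt (by positivity)]
    exact Finset.sum_congr rfl fun i _ => by rw [Real.norm_eq_abs, sq_abs]
  set x₁ := A₁ ^ 2 - ‖V₁‖ ^ 2 with hx₁_def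
  set x₂ := A₂ ^ 2 - ‖V₂‖ ^ 2 with hx₂_def
  have hn₁' : n₁ = Real.sqrt x₁ := by
    rw [hn₁, hx₁_def, ← hnormsq V₁]
    congr 2
    exact Finset.sum_congr rfl fun j _ => by rw [hcomp f₁ h₁_nonneg h₁_int j]
  have hn₂' : n₂ = Real.sqrt x₂ := by
    rw [hn₂, hx₂_def, ← hnormsq V₂]
    congr 2
    exact Finset.sum_congr rfl fun j _ => by rw [hcomp f₂ h₂_nonneg h₂_int j]
  have hVbound : ∀ (f : EuclideanSpace ℝ (Fin 3) → ℝ), (∀ q, 0 ≤ f q) → Integrable f →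
      (∀ q : EuclideanSpace ℝ (Fin 3), 2 * R < ‖q‖ → f q = 0) →
      ‖∫ q, G f q‖ ≤ (2 * R / s) * ∫ q, f q := by
    intro f hf hfi hsupp
    calc ‖∫ q, G f q‖ ≤ ∫ q, ‖G f q‖ := norm_integral_le_integral_norm _
      _ ≤ ∫ q, (2 * R / s) * f q := by
          apply integral_mono ((hGint f hf hfi).norm) (hfi.const_mul _)
          intro q
          show ‖G f q‖ ≤ (2 * R / s) * f q
          rw [hGnorm f q, abs_of_nonneg (hf q)]
          rcases le_or_gt ‖q‖ (2 * R) with h | h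
          · calc f q * (‖q‖ / w q) ≤ f q * (2 * R / s) :=
                mul_le_mul_of_nonneg_left (hratioR q h) (hf q)
              _ = (2 * R / s) * f q := mul_comm _ _
          · rw [hsupp q h]; simp
      _ = (2 * R / s) * ∫ q, f q := integral_const_mul _ _
  have hV₁b : ‖V₁‖ ≤ (2 * R / s) * A₁ := hVbound f₁ h₁_nonneg h₁_int h₁_supp
  have hV₂b : ‖V₂‖ ≤ (2 * R / s) * A₂ := hVbound f₂ h₂_nonneg h₂_int h₂_supp
  have hcs : 2 * R / s ≤ 1 := by rw [div_le_one hs_pos]; exact h2Rs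
  have hcs0 : 0 ≤ 2 * R / s := by positivity
  have hV₁A : ‖V₁‖ ≤ A₁ := hV₁b.trans (by nlinarith)
  have hV₂A : ‖V₂‖ ≤ A₂ := hV₂b.trans (by nlinarith)
  have hx₁_ge : (A₁ / s) ^ 2 ≤ x₁ := by
    rw [hx₁_def, div_pow, div_le_iff₀ (by positivity : (0:ℝ) < s ^ 2)]
    have h1 : ‖V₁‖ ^ 2 ≤ (2 * R / s) ^ 2 * A₁ ^ 2 := by
      nlinarith [norm_nonneg V₁, hV₁b]
    have h2 : (2 * R / s) ^ 2 * s ^ 2 = 4 * R ^ 2 := by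
      rw [div_pow, div_mul_cancel₀ _ (by positivity : (s:ℝ) ^ 2 ≠ 0)]
      ring
    have h4 : ‖V₁‖ ^ 2 * s ^ 2 ≤ 4 * R ^ 2 * A₁ ^ 2 := by
      nlinarith [mul_le_mul_of_nonneg_right h1 (sq_nonneg s), h2]
    have h5 : A₁ ^ 2 * s ^ 2 = (1 + 4 * R ^ 2) * A₁ ^ 2 := by rw [hs_sq]; ring
    nlinarith [h4, h5]
  have hx₂_ge : (A₂ / s) ^ 2 ≤ x₂ := by
    rw [hx₂_def, div_pow, div_le_iff₀ (by positivity : (0:ℝ) < s ^ 2)]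
    have h1 : ‖V₂‖ ^ 2 ≤ (2 * R / s) ^ 2 * A₂ ^ 2 := by
      nlinarith [norm_nonneg V₂, hV₂b]
    have h2 : (2 * R / s) ^ 2 * s ^ 2 = 4 * R ^ 2 := by
      rw [div_pow, div_mul_cancel₀ _ (by positivity : (s:ℝ) ^ 2 ≠ 0)]
      ring
    have h4 : ‖V₂‖ ^ 2 * s ^ 2 ≤ 4 * R ^ 2 * A₂ ^ 2 := by
      nlinarith [mul_le_mul_of_nonneg_right h1 (sq_nonneg s), h2]
    have h5 : A₂ ^ 2 * s ^ 2 = (1 + 4 * R ^ 2) * A₂ ^ 2 := by rw [hs_sq]; ring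
    nlinarith [h4, h5]
  have hx₁_nonneg : 0 ≤ x₁ := le_trans (sq_nonneg _) hx₁_ge
  have hx₂_nonneg : 0 ≤ x₂ := le_trans (sq_nonneg _) hx₂_ge
  have hn₁_low : A₁ / s ≤ n₁ := by
    rw [hn₁']
    calc A₁ / s = Real.sqrt ((A₁ / s) ^ 2) := (Real.sqrt_sq (by positivity)).symm
      _ ≤ Real.sqrt x₁ := Real.sqrt_le_sqrt hx₁_ge
  have hn₂_low : A₂ / s ≤ n₂ := by
    rw [hn₂']
    calc A₂ / s = Real.sqrt ((A₂ / s) ^ 2) := (Real.sqrt_sq (by positivity)).symm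
      _ ≤ Real.sqrt x₂ := Real.sqrt_le_sqrt hx₂_ge
  have hn₁_nonneg : 0 ≤ n₁ := hn₁' ▸ Real.sqrt_nonneg _
  have hn₂_nonneg : 0 ≤ n₂ := hn₂' ▸ Real.sqrt_nonneg _
  have hAD : |A₁ - A₂| ≤ D := by
    rw [hA₁_def, hA₂_def, ← integral_sub h₁_int h₂_int]
    calc |∫ q, (f₁ q - f₂ q)| = ‖∫ q, (f₁ q - f₂ q)‖ := (Real.norm_eq_abs _).symm
      _ ≤ ∫ q, ‖f₁ q - f₂ q‖ := norm_integral_le_integral_norm _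
      _ = D := by rw [hD_def]; simp [Real.norm_eq_abs]
  have hVD : ‖V₁ - V₂‖ ≤ D := by
    rw [hV₁_def, hV₂_def, ← integral_sub hG₁ hG₂]
    calc ‖∫ q, (G f₁ q - G f₂ q)‖ ≤ ∫ q, ‖G f₁ q - G f₂ q‖ := norm_integral_le_integral_norm _
      _ ≤ ∫ q, |f₁ q - f₂ q| := by
          apply integral_mono (hG₁.sub hG₂).norm (h₁_int.sub h₂_int).abs
          intro q
          show ‖G f₁ q - G f₂ q‖ ≤ |f₁ q - f₂ q|
          have heq : G f₁ q - G f₂ q = ((f₁ q - f₂ q) / w q) • q := by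
            rw [hG_def]
            show (f₁ q / w q) • q - (f₂ q / w q) • q = _
            rw [← sub_smul, ← sub_div]
          rw [heq, norm_smul, Real.norm_eq_abs, abs_div, abs_of_pos (hw_pos q)]
          calc |f₁ q - f₂ q| / w q * ‖q‖ = |f₁ q - f₂ q| * (‖q‖ / w q) := by ring
            _ ≤ |f₁ q - f₂ q| * 1 := mul_le_mul_of_nonneg_left (hratio1 q) (abs_nonneg _)
            _ = |f₁ q - f₂ q| := mul_one _
      _ = D := rfl
  have hVnormD : |‖V₁‖ - ‖V₂‖| ≤ D := le_trans (abs_norm_sub_norm_le V₁ V₂) hVD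
  have hxdiff : |x₁ - x₂| ≤ 2 * (A₁ + A₂) * D := by
    rw [abs_le]
    obtain ⟨h1, h2⟩ := abs_le.mp hAD
    obtain ⟨h3, h4⟩ := abs_le.mp hVnormD
    constructor
    · nlinarith [norm_nonneg V₁, norm_nonneg V₂]
    · nlinarith [norm_nonneg V₁, norm_nonneg V₂]
  have hDset : ∫ q in {q : EuclideanSpace ℝ (Fin 3) | ‖q‖ ≤ 2 * R}, |f₁ q - f₂ q| = D := by
    rw [hD_def]
    apply setIntegral_eq_integral_of_forall_compl_eq_zero
    intro q hq
    simp only [Set.mem_setOf_eq, not_le] at hq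
    rw [h₁_supp q hq, h₂_supp q hq]
    simp
  rw [hDset]
  rcases eq_or_lt_of_le (by positivity : (0:ℝ) ≤ n₁ + n₂) with hsum | hsum
  · have hn₁0 : n₁ = 0 := by linarith
    have hn₂0 : n₂ = 0 := by linarith
    rw [hn₁0, hn₂0, sub_zero, abs_zero]
    positivity
  · have hkey : |n₁ - n₂| * (n₁ + n₂) = |x₁ - x₂| := by
      have hsq₁ : n₁ ^ 2 = x₁ := by rw [hn₁']; exact Real.sq_sqrt hx₁_nonneg
      have hsq₂ : n₂ ^ 2 = x₂ := by rw [hn₂']; exact Real.sq_sqrt hx₂_nonneg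
      calc |n₁ - n₂| * (n₁ + n₂) = |n₁ - n₂| * |n₁ + n₂| := by rw [abs_of_pos hsum]
        _ = |(n₁ - n₂) * (n₁ + n₂)| := (abs_mul _ _).symm
        _ = |x₁ - x₂| := by
            rw [show (n₁ - n₂) * (n₁ + n₂) = n₁ ^ 2 - n₂ ^ 2 by ring, hsq₁, hsq₂]
    have hchain : |n₁ - n₂| * (n₁ + n₂) ≤ (2 * s * D) * (n₁ + n₂) := by
      rw [hkey]
      calc |x₁ - x₂| ≤ 2 * (A₁ + A₂) * D := hxdiff
        _ = (2 * s * D) * ((A₁ + A₂) / s) := by field_simp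
        _ ≤ (2 * s * D) * (n₁ + n₂) := by
            apply mul_le_mul_of_nonneg_left _ (by positivity)
            rw [add_div]
            exact add_le_add hn₁_low hn₂_low
    linarith [le_of_mul_le_mul_right hchain hsum]
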